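/- Define binary sequences recursively by S_1 = 0001000 and S_{m+1} = S_m[0, m+3] · ¬S_m[m+4] · S_m[m+2, 3m+3] (where ¬ denotes bit complement and S[a,b] denotes the subword from position a to b inclusive, 0-indexed). Then for every m ≥ 1, S_m has length 3m + 4 and is a binary robust positioning sequence of strength 3m+1 and distance 2m: any two distinct contiguous subwords of S_m of length 3m+1 have Hamming distance at least 2m. -/

import Mathlib

/-- The contiguous length-`n` window of the sequence `s` starting at position `i`. -/
def window {α : Type*} (s : ℕ → α) (n i : ℕ) : Fin n → α := fun k => s (i + k)

/-- `s` (restricted to its first `N` entries) is a robust positioning sequence of strength `n`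
and distance `d`. -/
def IsRPS {α : Type*} [DecidableEq α] (s : ℕ → α) (N n d : ℕ) : Prop :=
  ∀ i j : ℕ, i + n ≤ N → j + n ≤ N → i ≠ j →
    d ≤ hammingDist (window s n i) (window s n j)

/-- The recursively defined sequences: `S_1 = 0001000` and
`S_{m+1} = S_m[0, m+3] · ¬S_m[m+4] · S_m[m+2, 3m+3]`. -/
def Sseq : ℕ → List Bool
  | 0 => []
  | 1 => [false, false, false, true, false, false, false]
  | (m + 2) =>
      let p := Sseq (m + 1)
      p.take ((m + 1) + 4) ++ [!(p.getD ((m + 1) + 4) false)] ++ p.drop ((m + 1) + 2)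

/-- The defining proposition of the closed form for the bits of `Sseq`. -/
def PB (m j : ℕ) : Prop :=
  (3 ≤ j ∧ j ≤ m + 3 ∧ j % 2 = 1) ∨
    (m + 4 ≤ j ∧ j ≤ 3 * m ∧ ((m + j) % 4 = 0 ∨ (m + j) % 4 = 3))

instance PB.decidable (m j : ℕ) : Decidable (PB m j) := by unfold PB; infer_instance

/-- Closed form for the bits of `Sseq m`. -/
def fbit (m j : ℕ) : Bool := decide (PB m j)

lemma getD_drop {α : Type*} : ∀ (l : List α) (k j : ℕ) (d : α),
    (l.drop k).getD j d = l.getD (k + j) d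
  | _, 0, _, _ => by simp
  | [], k+1, j, d => by simp
  | a :: l, k+1, j, d => by
      have h : k + 1 + j = (k + j) + 1 := by omega
      rw [List.drop_succ_cons, h, List.getD_cons_succ]
      exact getD_drop l k j d

lemma getD_take {α : Type*} (l : List α) {k j : ℕ} (d : α) (h : j < k) :
    (l.take k).getD j d = l.getD j d := by
  simp [List.getD_eq_getElem?_getD, List.getElem?_take_of_lt h]

lemma Sseq_length' : ∀ m : ℕ, (Sseq (m + 1)).length = 3 * (m + 1) + 4 := by
  intro m
  induction m with
  | zero => rfl
  | succ n ih =>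
    show (Sseq (n + 2)).length = _
    rw [Sseq]
    simp only [List.length_append, List.length_take, List.length_drop, List.length_singleton, ih]
    omega

lemma fbit_congr {m₁ j₁ m₂ j₂ : ℕ} (h : PB m₁ j₁ ↔ PB m₂ j₂) : fbit m₁ j₁ = fbit m₂ j₂ := by
  simp only [fbit, decide_eq_decide]
  exact h

lemma fbit_ne {m x y : ℕ} (h : ¬ (PB m x ↔ PB m y)) : fbit m x ≠ fbit m y := by
  simp only [fbit, ne_eq, decide_eq_decide]
  exact h

lemma Sseq_getD' : ∀ m : ℕ, ∀ j : ℕ, (Sseq (m + 1)).getD j false = fbit (m + 1) j := by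
  intro m
  induction m with
  | zero =>
    intro j
    rcases j with _|_|_|_|_|_|_|j
    · rfl
    · rfl
    · rfl
    · rfl
    · rfl
    · rfl
    · rfl
    · rw [List.getD_eq_default _ _
        (by simp only [Sseq, List.length_cons, List.length_nil]; omega)]
      symm
      simp only [fbit, decide_eq_false_iff_not, PB]
      exact decide_eq_false (by omega)
  | succ n ih =>
    intro j
    have hp : (Sseq (n + 1)).length = 3 * n + 7 := by rw [Sseq_length']; ring
    have hA : ((Sseq (n+1)).take ((n+1)+4)).length = n + 5 := by
      rw [List.length_take, hp]; omega
    have hAx : ((Sseq (n+1)).take ((n+1)+4) ++ [!((Sseq (n+1)).getD ((n+1)+4) false)]).length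
        = n + 6 := by
      rw [List.length_append, hA]; rfl
    show ((Sseq (n+1)).take ((n+1)+4) ++ [!((Sseq (n+1)).getD ((n+1)+4) false)]
        ++ (Sseq (n+1)).drop ((n+1)+2)).getD j false = fbit (n + 2) j
    obtain ⟨q, r, hr, hm4⟩ : ∃ q r, r < 4 ∧ n = 4*q + r := ⟨n/4, n%4, by omega, by omega⟩
    obtain ⟨s, u, hu, hj4⟩ : ∃ s u, u < 4 ∧ j = 4*s + u := ⟨j/4, j%4, by omega, by omega⟩
    rcases lt_trichotomy j (n + 5) with hj | hj | hj
    · rw [List.getD_append _ _ _ _ (by rw [hAx]; omega),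
        List.getD_append _ _ _ _ (by rw [hA]; omega),
        getD_take _ _ (by omega), ih]
      apply fbit_congr
      subst hm4 hj4
      unfold PB
      interval_cases r <;> interval_cases u <;> omega
    · rw [List.getD_append _ _ _ _ (by rw [hAx]; omega),
        List.getD_append_right _ _ _ _ (by rw [hA]; omega), hA]
      have h0 : j - (n + 5) = 0 := by omega
      rw [h0, List.getD_cons_zero, ih]
      have : fbit (n + 2) j = !fbit (n + 1) ((n+1)+4) := by
        have hiff : PB (n + 2) j ↔ ¬ PB (n + 1) ((n+1)+4) := by
          subst hm4 hj4
          unfold PB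
          interval_cases r <;> interval_cases u <;> omega
        rw [fbit, fbit, ← decide_not, decide_eq_decide]
        exact hiff
      rw [this]
    · rw [List.getD_append_right _ _ _ _ (by rw [hAx]; omega), hAx, getD_drop, ih]
      have hidx : (n + 1) + 2 + (j - (n + 6)) = j - 3 := by omega
      rw [hidx]
      apply (fbit_congr _).symm
      subst hm4 hj4
      unfold PB
      interval_cases r <;> interval_cases u <;> omega

lemma Sseq_getD (m : ℕ) (hm : 1 ≤ m) (j : ℕ) : (Sseq m).getD j false = fbit m j := by
  obtain ⟨k, rfl⟩ : ∃ k, m = k + 1 := ⟨m - 1, by omega⟩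
  exact Sseq_getD' k j

lemma Sseq_length (m : ℕ) (hm : 1 ≤ m) : (Sseq m).length = 3 * m + 4 := by
  obtain ⟨k, rfl⟩ : ∃ k, m = k + 1 := ⟨m - 1, by omega⟩
  exact Sseq_length' k

lemma hd_ge {α : Type*} [DecidableEq α] {n d : ℕ} (a b : Fin n → α) (g : Fin d → Fin n)
    (hg : Function.Injective g) (h : ∀ t, a (g t) ≠ b (g t)) : d ≤ hammingDist a b := by
  have hc : (Finset.univ.image g).card ≤ (Finset.univ.filter fun i => a i ≠ b i).card := by
    apply Finset.card_le_card
    intro x hx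
    simp only [Finset.mem_image] at hx
    obtain ⟨t, _, rfl⟩ := hx
    simp only [Finset.mem_filter, Finset.mem_univ, true_and]
    exact h t
  rwa [Finset.card_image_of_injective _ hg, Finset.card_univ, Fintype.card_fin] at hc

lemma key1 (m i t : ℕ) (hm : 1 ≤ m) (hi : i ≤ 2) (ht : t < 2*m) :
    fbit m (i + ((if t ≤ m then t + 2 else 2*t + 2 - m) - i)) ≠
      fbit m (i + 1 + ((if t ≤ m then t + 2 else 2*t + 2 - m) - i)) := by
  apply fbit_ne
  obtain ⟨q, r, hr, rfl⟩ : ∃ q r, r < 4 ∧ m = 4*q + r := ⟨m/4, m%4, by omega, by omega⟩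
  obtain ⟨s, u, hu, rfl⟩ : ∃ s u, u < 4 ∧ t = 4*s + u := ⟨t/4, t%4, by omega, by omega⟩
  unfold PB
  split_ifs <;> interval_cases r <;> interval_cases u <;> omega

lemma key2 (m i t : ℕ) (hm : 1 ≤ m) (hi : i ≤ 1) (ht : t < 2*m) :
    fbit m (i + ((if t = 0 then 1 else m + 1 + t) - i)) ≠
      fbit m (i + 2 + ((if t = 0 then 1 else m + 1 + t) - i)) := by
  apply fbit_ne
  obtain ⟨q, r, hr, rfl⟩ : ∃ q r, r < 4 ∧ m = 4*q + r := ⟨m/4, m%4, by omega, by omega⟩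
  obtain ⟨s, u, hu, rfl⟩ : ∃ s u, u < 4 ∧ t = 4*s + u := ⟨t/4, t%4, by omega, by omega⟩
  unfold PB
  split_ifs <;> interval_cases r <;> interval_cases u <;> omega

lemma key3 (m t : ℕ) (hm : 1 ≤ m) (ht : t < 2*m) :
    fbit m (0 + (if t = 0 then 0 else if t ≤ m - 1 then t + 1
        else if t ≤ 2*m - 2 then 2*t + 3 - m else 3*m)) ≠
      fbit m (3 + (if t = 0 then 0 else if t ≤ m - 1 then t + 1
        else if t ≤ 2*m - 2 then 2*t + 3 - m else 3*m)) := by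
  apply fbit_ne
  obtain ⟨q, r, hr, rfl⟩ : ∃ q r, r < 4 ∧ m = 4*q + r := ⟨m/4, m%4, by omega, by omega⟩
  obtain ⟨s, u, hu, rfl⟩ : ∃ s u, u < 4 ∧ t = 4*s + u := ⟨t/4, t%4, by omega, by omega⟩
  unfold PB
  split_ifs <;> interval_cases r <;> interval_cases u <;> omega

lemma dist1 (m : ℕ) (hm : 1 ≤ m) (i j : ℕ) (hij : i + 1 = j) (hi : i ≤ 2) :
    2 * m ≤ hammingDist (window (fun j => (Sseq m).getD j false) (3 * m + 1) i)
      (window (fun j => (Sseq m).getD j false) (3 * m + 1) j) := by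
  subst hij
  apply hd_ge _ _ (fun t : Fin (2 * m) =>
    (⟨(if (t : ℕ) ≤ m then (t : ℕ) + 2 else 2 * (t : ℕ) + 2 - m) - i,
      by have := t.isLt; split_ifs <;> omega⟩ : Fin (3 * m + 1)))
  · intro a b hab
    have ha := a.isLt; have hb := b.isLt
    rw [Fin.mk.injEq] at hab
    apply Fin.ext
    split_ifs at hab <;> omega
  · intro t
    show (Sseq m).getD _ false ≠ (Sseq m).getD _ false
    rw [Sseq_getD m hm, Sseq_getD m hm]
    exact key1 m i (t : ℕ) hm hi t.isLt

lemma dist2 (m : ℕ) (hm : 1 ≤ m) (i j : ℕ) (hij : i + 2 = j) (hi : i ≤ 1) :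
    2 * m ≤ hammingDist (window (fun j => (Sseq m).getD j false) (3 * m + 1) i)
      (window (fun j => (Sseq m).getD j false) (3 * m + 1) j) := by
  subst hij
  apply hd_ge _ _ (fun t : Fin (2 * m) =>
    (⟨(if (t : ℕ) = 0 then 1 else m + 1 + (t : ℕ)) - i,
      by have := t.isLt; split_ifs <;> omega⟩ : Fin (3 * m + 1)))
  · intro a b hab
    have ha := a.isLt; have hb := b.isLt
    rw [Fin.mk.injEq] at hab
    apply Fin.ext
    split_ifs at hab <;> omega
  · intro t
    show (Sseq m).getD _ false ≠ (Sseq m).getD _ false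
    rw [Sseq_getD m hm, Sseq_getD m hm]
    exact key2 m i (t : ℕ) hm hi t.isLt

lemma dist3 (m : ℕ) (hm : 1 ≤ m) :
    2 * m ≤ hammingDist (window (fun j => (Sseq m).getD j false) (3 * m + 1) 0)
      (window (fun j => (Sseq m).getD j false) (3 * m + 1) 3) := by
  apply hd_ge _ _ (fun t : Fin (2 * m) =>
    (⟨if (t : ℕ) = 0 then 0 else if (t : ℕ) ≤ m - 1 then (t : ℕ) + 1
        else if (t : ℕ) ≤ 2 * m - 2 then 2 * (t : ℕ) + 3 - m else 3 * m,
      by have := t.isLt; split_ifs <;> omega⟩ : Fin (3 * m + 1)))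
  · intro a b hab
    have ha := a.isLt; have hb := b.isLt
    rw [Fin.mk.injEq] at hab
    apply Fin.ext
    split_ifs at hab <;> omega
  · intro t
    show (Sseq m).getD _ false ≠ (Sseq m).getD _ false
    rw [Sseq_getD m hm, Sseq_getD m hm]
    exact key3 m (t : ℕ) hm t.isLt

/-- For every `m ≥ 1`, `S_m` has length `3m + 4` and is a binary robust positioning sequence
of strength `3m + 1` and distance `2m`. -/
theorem Sseq_is_rps (m : ℕ) (hm : 1 ≤ m) :
    (Sseq m).length = 3 * m + 4 ∧
    IsRPS (fun j => (Sseq m).getD j false) (3 * m + 4) (3 * m + 1) (2 * m) := by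
  refine ⟨Sseq_length m hm, ?_⟩
  intro i j hi hj hij
  have hi3 : i ≤ 3 := by omega
  have hj3 : j ≤ 3 := by omega
  have d01 := dist1 m hm 0 1 rfl (by norm_num)
  have d12 := dist1 m hm 1 2 rfl (by norm_num)
  have d23 := dist1 m hm 2 3 rfl (by norm_num)
  have d02 := dist2 m hm 0 2 rfl (by norm_num)
  have d13 := dist2 m hm 1 3 rfl (by norm_num)
  have d03 := dist3 m hm
  interval_cases i <;> interval_cases j <;>
    first
      | omega
      | assumption
      | (rw [hammingDist_comm]; assumption)
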